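/- Composite correctness of one tape-move-right update: with notation as above, after writing s' at position 0 and moving the head right, the new encodings are r_new = −4r + (2 s₀ + 1) and l_new = −l/4 + (2 s' + 1)/4, and these equal C⁺(s₁ s₂ …) and C⁻(s' s₋₁ s₋₂ …) respectively. -/

import Mathlib

/-- A real number is a bit: `0` or `1`. -/
def IsBit (x : ℝ) : Prop := x = 0 ∨ x = 1

/-- Cantor-like encoding of the right half-tape of a bi-infinite tape `f : ℤ → ℝ` read
from head position `h`: `C⁺(f_h f_{h+1} …) = ∑_{k≥0} (-1)^k (2 f_{h+k} + 1)/4^(k+1)`. -/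
noncomputable def Cright (f : ℤ → ℝ) (h : ℤ) : ℝ :=
  ∑' k : ℕ, (-1 : ℝ) ^ k * (2 * f (h + k) + 1) / 4 ^ (k + 1)

/-- Cantor-like encoding of the left half-tape of a bi-infinite tape `f : ℤ → ℝ` read
from head position `h`: `C⁻(f_{h-1} f_{h-2} …) = ∑_{k≥1} (-1)^(k+1) (2 f_{h-k} + 1)/4^k`. -/
noncomputable def Cleft (f : ℤ → ℝ) (h : ℤ) : ℝ :=
  ∑' k : ℕ, (-1 : ℝ) ^ k * (2 * f (h - (k + 1)) + 1) / 4 ^ (k + 1)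

lemma summable_bit (a : ℕ → ℝ) (ha : ∀ k, IsBit (a k)) :
    Summable (fun k : ℕ => (-1 : ℝ) ^ k * (2 * a k + 1) / 4 ^ (k + 1)) := by
  apply Summable.of_norm_bounded (g := fun k : ℕ => 3 * (1 / 4 : ℝ) ^ k)
    ((summable_geometric_of_lt_one (by norm_num) (by norm_num)).mul_left 3)
  intro k
  have h4 : (0:ℝ) < (4:ℝ) ^ (k+1) := by positivity
  rw [Real.norm_eq_abs, abs_div, abs_mul, abs_pow, abs_neg, abs_one, one_pow, one_mul,
    abs_of_pos h4]
  have hb : |2 * a k + 1| ≤ 3 := by rcases ha k with h | h <;> rw [h] <;> norm_num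
  calc |2 * a k + 1| / 4 ^ (k + 1) ≤ 3 / 4 ^ (k + 1) := by gcongr
    _ ≤ 3 / 4 ^ k := by
        have h1 : (4:ℝ) ^ k ≤ 4 ^ (k + 1) := pow_le_pow_right₀ (by norm_num) (by omega)
        exact div_le_div_of_nonneg_left (by norm_num) (by positivity) h1
    _ = 3 * (1 / 4) ^ k := by rw [div_pow, one_pow, mul_one_div]

theorem tape_move_right_update (s : ℤ → ℝ) (hs : ∀ n, IsBit (s n)) (s' : ℝ) (hs' : IsBit s') :
    let r := Cright s 0
    let l := Cleft s 0
    let t : ℤ → ℝ := fun n => if n = 0 then s' else s n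
    (-4 * r + (2 * s 0 + 1) = Cright t 1) ∧
    (-l / 4 + (2 * s' + 1) / 4 = Cleft t 1) := by
  intro r l t
  constructor
  · -- right part
    have hsum : Summable (fun k : ℕ => (-1 : ℝ) ^ k * (2 * s ((0:ℤ) + k) + 1) / 4 ^ (k + 1)) :=
      summable_bit _ (fun k => hs _)
    have hzero := Summable.tsum_eq_zero_add hsum
    have htail : (∑' k : ℕ, (-1 : ℝ) ^ (k+1) * (2 * s ((0:ℤ) + (k+1:ℕ)) + 1) / 4 ^ ((k+1) + 1))
        = (-(1/4)) * ∑' k : ℕ, (-1 : ℝ) ^ k * (2 * s ((1:ℤ) + k) + 1) / 4 ^ (k + 1) := by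
      rw [← tsum_mul_left]
      congr 1
      funext k
      have : ((0:ℤ) + (k+1:ℕ)) = (1:ℤ) + k := by push_cast; ring
      rw [this]
      rw [pow_succ, pow_succ (4:ℝ) (k+1), pow_succ]
      ring
    have hCt : Cright t 1 = ∑' k : ℕ, (-1 : ℝ) ^ k * (2 * s ((1:ℤ) + k) + 1) / 4 ^ (k + 1) := by
      unfold Cright
      congr 1
      funext k
      have hne : (1:ℤ) + k ≠ 0 := by positivity
      simp only [t, if_neg hne]
    have hr : r = ∑' k : ℕ, (-1 : ℝ) ^ k * (2 * s ((0:ℤ) + k) + 1) / 4 ^ (k + 1) := rfl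
    rw [hr, hzero, htail, hCt]
    push_cast
    ring
  · -- left part
    have hsumL : Summable (fun k : ℕ => (-1 : ℝ) ^ k * (2 * t ((1:ℤ) - (k + 1)) + 1) / 4 ^ (k + 1)) := by
      apply summable_bit
      intro k
      by_cases h : (1:ℤ) - ((k:ℤ) + 1) = 0
      · simp only [t, if_pos h]; exact hs'
      · simp only [t, if_neg h]; exact hs _
    have hzero := Summable.tsum_eq_zero_add hsumL
    have hCt : Cleft t 1 = ∑' k : ℕ, (-1 : ℝ) ^ k * (2 * t ((1:ℤ) - (k + 1)) + 1) / 4 ^ (k + 1) := rfl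
    have h0 : t ((1:ℤ) - ((0:ℕ) + 1)) = s' := by
      norm_num [t]
    have htail : (∑' k : ℕ, (-1 : ℝ) ^ (k+1) * (2 * t ((1:ℤ) - ((k+1:ℕ) + 1)) + 1) / 4 ^ ((k+1) + 1))
        = (-(1/4)) * ∑' k : ℕ, (-1 : ℝ) ^ k * (2 * s ((0:ℤ) - (k + 1)) + 1) / 4 ^ (k + 1) := by
      rw [← tsum_mul_left]
      congr 1
      funext k
      have hne : (1:ℤ) - ((k+1:ℕ) + 1) ≠ 0 := by push_cast; omega
      have harg : (1:ℤ) - ((k+1:ℕ) + 1) = (0:ℤ) - ((k:ℤ) + 1) := by push_cast; ring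
      have ht : t ((1:ℤ) - (((k:ℕ)+1:ℕ) + 1)) = s ((0:ℤ) - (k + 1)) := by
        simp only [t]
        rw [if_neg hne, harg]
      rw [ht, pow_succ, pow_succ (4:ℝ) (k+1), pow_succ]
      ring
    have hl : l = ∑' k : ℕ, (-1 : ℝ) ^ k * (2 * s ((0:ℤ) - (k + 1)) + 1) / 4 ^ (k + 1) := rfl
    rw [hCt, hzero, htail, h0, hl]
    push_cast
    ring
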